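/- For the example series ∑_{n=0}^∞ a_n, the set Z_R = { r ∈ ℝ : ∑_{n=0}^∞ a_{σ(n)} = r for some type R λ-permutation σ } equals {0}: there is a type R λ-permutation rearranging the series to 0, and every type R λ-permutation of the series rearranges it to 0. -/

import Mathlib

open Filter Finset

noncomputable section
open scoped Classical

/-- Partial sum of the series `∑ a n`: sum of the first `n` terms. -/
def partialSum (a : ℕ → ℝ) (n : ℕ) : ℝ := ∑ i ∈ Finset.range n, a i

/-- The series `∑ a n` converges to `L`. -/
def ConvergesTo (a : ℕ → ℝ) (L : ℝ) : Prop :=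
  Filter.Tendsto (partialSum a) Filter.atTop (nhds L)

/-- The series `∑ a n` converges. -/
def Converges (a : ℕ → ℝ) : Prop := ∃ L : ℝ, ConvergesTo a L

/-- The series `∑ a n` is conditionally divergent: it diverges, but some
rearrangement of it converges. -/
def CondDivergent (a : ℕ → ℝ) : Prop :=
  ¬ Converges a ∧ ∃ σ : Equiv.Perm ℕ, Converges (fun n => a (σ n))

/-- `σ` is a type R permutation of the series `∑ a n`: it preserves the relative
order of terms of the same sign. -/
def IsTypeR (a : ℕ → ℝ) (σ : Equiv.Perm ℕ) : Prop :=
  ∀ i j : ℕ, σ i < σ j →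
    ((0 < a (σ i) ∧ 0 < a (σ j)) ∨ (a (σ i) ≤ 0 ∧ a (σ j) ≤ 0)) → i < j

/-- The number of maximal integer intervals whose union is the finite set `s`
(= the number of `x ∈ s` with `x + 1 ∉ s`). -/
def blockCount (s : Finset ℕ) : ℕ := (s.filter (fun x => x + 1 ∉ s)).card

/-- `σ` has bounded block number `C`: at every stage `n`, the set
`σ '' {0, 1, …, n}` is a union of at most `C` maximal integer intervals. -/
def HasBBN (σ : Equiv.Perm ℕ) (C : ℕ) : Prop :=
  ∀ n : ℕ, blockCount ((Finset.range (n + 1)).image σ) ≤ C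

/-- `σ` is a type R λ-permutation of the series `∑ a n`: a type R permutation
with bounded block number whose rearranged series converges. -/
def IsTypeRLambda (a : ℕ → ℝ) (σ : Equiv.Perm ℕ) : Prop :=
  IsTypeR a σ ∧ (∃ C : ℕ, HasBBN σ C) ∧ Converges (fun n => a (σ n))

/-- The set of sums attainable by type R λ-permutations of `∑ a n`. -/
def ZR (a : ℕ → ℝ) : Set ℝ :=
  {r : ℝ | ∃ σ : Equiv.Perm ℕ, IsTypeRLambda a σ ∧ ConvergesTo (fun n => a (σ n)) r}

/-- The first element `p_i` of the `i`-th positive block `P_i` (blocks 1-indexed):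
the `i`-th index `n` with `a n > 0` which starts a maximal interval of positive terms. -/
def posStartIdx (a : ℕ → ℝ) (i : ℕ) : ℕ :=
  Nat.nth (fun n => 0 < a n ∧ (n = 0 ∨ a (n - 1) ≤ 0)) (i - 1)

/-- The last element `q_i` of the `i`-th positive block `P_i` (blocks 1-indexed). -/
def posEndIdx (a : ℕ → ℝ) (i : ℕ) : ℕ :=
  Nat.nth (fun n => 0 < a n ∧ a (n + 1) ≤ 0) (i - 1)

/-- The first element `n_i` of the `i`-th negative block `N_i` (blocks 1-indexed). -/
def negStartIdx (a : ℕ → ℝ) (i : ℕ) : ℕ :=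
  Nat.nth (fun n => a n ≤ 0 ∧ (n = 0 ∨ 0 < a (n - 1))) (i - 1)

/-- The last element `m_i` of the `i`-th negative block `N_i` (blocks 1-indexed). -/
def negEndIdx (a : ℕ → ℝ) (i : ℕ) : ℕ :=
  Nat.nth (fun n => a n ≤ 0 ∧ 0 < a (n + 1)) (i - 1)

/-- `S_{[P_i, P_j]}`: the sum of the terms of `∑ a n` lying in the positive blocks
`P_i ∪ ⋯ ∪ P_j` (interpreted as `0` when `j < i`). -/
def SP (a : ℕ → ℝ) (i j : ℕ) : ℝ :=
  if j < i then 0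
  else ∑ n ∈ Finset.Icc (posStartIdx a i) (posEndIdx a j), if 0 < a n then a n else 0

/-- `S_{[N_i, N_j]}`: the sum of the terms of `∑ a n` lying in the negative blocks
`N_i ∪ ⋯ ∪ N_j` (interpreted as `0` when `j < i`). -/
def SN (a : ℕ → ℝ) (i j : ℕ) : ℝ :=
  if j < i then 0
  else ∑ n ∈ Finset.Icc (negStartIdx a i) (negEndIdx a j), if a n ≤ 0 then a n else 0

/-- The substantial property on positive blocks. -/
def STP (a : ℕ → ℝ) : Prop :=
  ∃ k : ℕ, ∃ ε : ℝ, 0 < ε ∧ ∃ i0 : ℕ, ∀ i > i0, SP a i (i + k) ≥ ε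

/-- The substantial property on negative blocks. -/
def STN (a : ℕ → ℝ) : Prop :=
  ∃ k : ℕ, ∃ ε : ℝ, 0 < ε ∧ ∃ i0 : ℕ, ∀ i > i0, SN a i (i + k) ≤ -ε
/-- Length of the `k`-th block of the example series: `2k` if `k` is a perfect
square, otherwise `2`. -/
def exBlockLen (k : ℕ) : ℕ := if Nat.sqrt k * Nat.sqrt k = k then 2 * k else 2

/-- Starting index (in the example series) of the `k`-th block (`k ≥ 1`). -/
def exBlockStart (k : ℕ) : ℕ := ∑ j ∈ Finset.Ico 1 k, exBlockLen j

/-- The index `k ≥ 1` of the block containing position `n` of the example series. -/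
def exBlockIdx (n : ℕ) : ℕ := Nat.findGreatest (fun k => exBlockStart k ≤ n) (n + 1)

/-- The example series: the concatenation, for `k = 1, 2, 3, …`, of the blocks
`B_k`, where `B_k` consists of `k` copies of `1/k` followed by `k` copies of
`-1/k` if `k` is a perfect square, and `B_k = (1/k, -1/k)` otherwise. -/
def exA (n : ℕ) : ℝ :=
  let k := exBlockIdx n
  let o := n - exBlockStart k
  if Nat.sqrt k * Nat.sqrt k = k then
    (if o < k then (1 : ℝ) / (k : ℝ) else -((1 : ℝ) / (k : ℝ)))
  else (if o = 0 then (1 : ℝ) / (k : ℝ) else -((1 : ℝ) / (k : ℝ)))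

/-- Number of positive (= negative) terms in block `k`. -/
def exC (k : ℕ) : ℕ := if Nat.sqrt k * Nat.sqrt k = k then k else 1

/-- Cumulative number of positive terms in blocks `1..K`. -/
def exCpos (K : ℕ) : ℕ := ∑ k ∈ Finset.Icc 1 K, exC k

lemma exC_pos {k : ℕ} (hk : 1 ≤ k) : 1 ≤ exC k := by
  unfold exC; split <;> omega

lemma exBlockLen_eq (k : ℕ) : exBlockLen k = 2 * exC k := by
  unfold exBlockLen exC; split <;> ring

lemma exCpos_zero : exCpos 0 = 0 := by simp [exCpos]

lemma exCpos_succ (K : ℕ) : exCpos (K + 1) = exCpos K + exC (K + 1) := by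
  unfold exCpos
  rw [Finset.sum_Icc_succ_top (by omega)]

lemma exCpos_mono : Monotone exCpos := by
  apply monotone_nat_of_le_succ
  intro n; rw [exCpos_succ]; omega

lemma exCpos_lt_succ (K : ℕ) : exCpos K < exCpos (K + 1) := by
  rw [exCpos_succ]; have := exC_pos (k := K + 1) (by omega); omega

lemma exCpos_strictMono : StrictMono exCpos :=
  strictMono_nat_of_lt_succ exCpos_lt_succ

lemma le_exCpos (K : ℕ) : K ≤ exCpos K := by
  induction K with
  | zero => simp [exCpos_zero]
  | succ n ih => rw [exCpos_succ]; have := exC_pos (k := n + 1) (by omega); omega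

lemma exists_lt_exCpos (m : ℕ) : ∃ K, m < exCpos K := ⟨m + 1, by have := le_exCpos (m+1); omega⟩

/-- Index (≥ 1) of the block containing the `m`-th positive (or negative) term. -/
def exBlk (m : ℕ) : ℕ := Nat.find (exists_lt_exCpos m)

lemma lt_exCpos_exBlk (m : ℕ) : m < exCpos (exBlk m) := Nat.find_spec (exists_lt_exCpos m)

lemma exBlk_pos (m : ℕ) : 1 ≤ exBlk m := by
  rcases Nat.eq_zero_or_pos (exBlk m) with h | h
  · exfalso; have := lt_exCpos_exBlk m; rw [h] at this; simp [exCpos_zero] at this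
  · exact h

lemma exCpos_exBlk_sub_one_le (m : ℕ) : exCpos (exBlk m - 1) ≤ m := by
  have h1 := exBlk_pos m
  by_contra h
  push_neg at h
  exact Nat.find_min (exists_lt_exCpos m) (show exBlk m - 1 < exBlk m by omega) h

lemma exBlk_mono : Monotone exBlk := by
  intro a b hab
  by_contra h
  push_neg at h
  have h1 := lt_exCpos_exBlk b
  have h2 := exCpos_exBlk_sub_one_le a
  have h3 := exBlk_pos a
  have := exCpos_mono (show exBlk b ≤ exBlk a - 1 by omega)
  omega

lemma exBlk_eq_iff {m K : ℕ} (hK : 1 ≤ K) :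
    exBlk m = K ↔ exCpos (K - 1) ≤ m ∧ m < exCpos K := by
  constructor
  · rintro rfl; exact ⟨exCpos_exBlk_sub_one_le m, lt_exCpos_exBlk m⟩
  · rintro ⟨h1, h2⟩
    have ha := lt_exCpos_exBlk m
    have hb := exCpos_exBlk_sub_one_le m
    have hc := exBlk_pos m
    rcases Nat.lt_trichotomy (exBlk m) K with hlt | heq | hgt
    · have := exCpos_mono (show exBlk m ≤ K - 1 by omega); omega
    · exact heq
    · have := exCpos_mono (show K ≤ exBlk m - 1 by omega); omega

lemma exBlk_exCpos (K : ℕ) : exBlk (exCpos K) = K + 1 := by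
  rw [exBlk_eq_iff (by omega)]
  simpa using exCpos_lt_succ K

lemma exBlockStart_eq (k : ℕ) : exBlockStart k = 2 * exCpos (k - 1) := by
  unfold exBlockStart exCpos
  rcases Nat.eq_zero_or_pos k with rfl | hk
  · simp
  · rw [show Finset.Ico 1 k = Finset.Icc 1 (k - 1) by rw [← Finset.Ico_add_one_right_eq_Icc]; congr 1; omega,
      Finset.mul_sum]
    exact Finset.sum_congr rfl fun j _ => exBlockLen_eq j

lemma exBlockStart_succ (k : ℕ) (hk : 1 ≤ k) :
    exBlockStart (k + 1) = exBlockStart k + 2 * exC k := by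
  rw [exBlockStart_eq, exBlockStart_eq]
  simp only [Nat.add_sub_cancel]
  rw [show k = (k - 1) + 1 by omega, exCpos_succ]
  have : k - 1 + 1 = k := by omega
  rw [this]; ring

lemma exBlockStart_mono : Monotone exBlockStart := by
  intro a b hab
  rw [exBlockStart_eq, exBlockStart_eq]
  exact Nat.mul_le_mul_left 2 (exCpos_mono (by omega))

/-- Block decomposition of a position. -/
lemma exBlockIdx_eq {k o : ℕ} (hk : 1 ≤ k) (ho : o < exBlockLen k) :
    exBlockIdx (exBlockStart k + o) = k := by
  set n := exBlockStart k + o with hn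
  have hstart : exBlockStart k ≤ n := by omega
  have hklen : 2 ≤ exBlockLen k := by rw [exBlockLen_eq]; have := exC_pos hk; omega
  have hkn : k ≤ n + 1 := by
    have h1 : 2 * (k - 1) ≤ exBlockStart k := by
      rw [exBlockStart_eq]; have := le_exCpos (k - 1); omega
    omega
  have hge : k ≤ exBlockIdx n := Nat.le_findGreatest hkn hstart
  have hle : exBlockIdx n ≤ k := by
    by_contra h
    push_neg at h
    have h2 : exBlockStart (exBlockIdx n) ≤ n :=
      Nat.findGreatest_spec (m := k) (P := fun k => exBlockStart k ≤ n) hkn hstart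
    have h3 : exBlockStart (k + 1) ≤ exBlockStart (exBlockIdx n) := exBlockStart_mono (by omega)
    rw [exBlockStart_succ k hk] at h3
    have := exC_pos hk
    rw [exBlockLen_eq] at ho
    omega
  omega

lemma exBlockIdx_pos (n : ℕ) : 1 ≤ exBlockIdx n := by
  unfold exBlockIdx
  apply Nat.le_findGreatest (m := 1) (P := fun k => exBlockStart k ≤ n)
  · omega
  · rw [exBlockStart_eq]; simp [exCpos_zero]

lemma exBlockIdx_start_le (n : ℕ) : exBlockStart (exBlockIdx n) ≤ n := by
  unfold exBlockIdx
  apply Nat.findGreatest_spec (m := 1) (P := fun k => exBlockStart k ≤ n)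
  · omega
  · rw [exBlockStart_eq]; simp [exCpos_zero]

lemma lt_exBlockIdx_start_succ (n : ℕ) : n < exBlockStart (exBlockIdx n + 1) := by
  have hle : exBlockIdx n ≤ n + 1 := Nat.findGreatest_le (P := fun k => exBlockStart k ≤ n) (n + 1)
  by_contra hcon
  push_neg at hcon
  have hlow : 2 * (exBlockIdx n + 1 - 1) ≤ exBlockStart (exBlockIdx n + 1) := by
    rw [exBlockStart_eq]; have := le_exCpos (exBlockIdx n + 1 - 1); omega
  have h2 : exBlockIdx n + 1 ≤ n + 1 := by omega
  have h3 := Nat.findGreatest_is_greatest (P := fun k => exBlockStart k ≤ n) (n := n + 1)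
    (k := exBlockIdx n + 1) (by unfold exBlockIdx; omega) h2
  exact h3 hcon

/-- Value of `exA` within block `k` at offset `o`. -/
lemma exA_eq {k o : ℕ} (hk : 1 ≤ k) (ho : o < 2 * exC k) :
    exA (exBlockStart k + o) = if o < exC k then (1 : ℝ) / k else -((1 : ℝ) / k) := by
  have hidx : exBlockIdx (exBlockStart k + o) = k :=
    exBlockIdx_eq hk (by rw [exBlockLen_eq]; omega)
  unfold exA
  rw [hidx]
  simp only [Nat.add_sub_cancel_left]
  by_cases hsq : Nat.sqrt k * Nat.sqrt k = k
  · rw [if_pos hsq, show exC k = k from by simp [exC, hsq]]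
  · rw [if_neg hsq, show exC k = 1 from by simp [exC, hsq]]
    by_cases h0 : o = 0 <;> simp [h0, Nat.lt_one_iff]

/-- Position of the `m`-th positive term (0-indexed). -/
def exPos (m : ℕ) : ℕ := m + exCpos (exBlk m - 1)

/-- Position of the `m`-th negative term (0-indexed). -/
def exNeg (m : ℕ) : ℕ := m + exCpos (exBlk m)

lemma exPos_eq_start (m : ℕ) :
    exPos m = exBlockStart (exBlk m) + (m - exCpos (exBlk m - 1)) := by
  have h := exCpos_exBlk_sub_one_le m
  rw [exPos, exBlockStart_eq]
  omega

lemma exNeg_eq_start (m : ℕ) :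
    exNeg m = exBlockStart (exBlk m) + (exC (exBlk m) + (m - exCpos (exBlk m - 1))) := by
  have h := exCpos_exBlk_sub_one_le m
  have h2 : exCpos (exBlk m) = exCpos (exBlk m - 1) + exC (exBlk m) := by
    have h1 := exBlk_pos m
    rw [show exBlk m = (exBlk m - 1) + 1 by omega, exCpos_succ]
    congr 2
  rw [exNeg, exBlockStart_eq]
  omega

lemma offset_lt (m : ℕ) : m - exCpos (exBlk m - 1) < exC (exBlk m) := by
  have h1 := lt_exCpos_exBlk m
  have h2 := exCpos_exBlk_sub_one_le m
  have h3 := exBlk_pos m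
  have h4 : exCpos (exBlk m) = exCpos (exBlk m - 1) + exC (exBlk m) := by
    rw [show exBlk m = (exBlk m - 1) + 1 by omega, exCpos_succ]
    congr 2
  omega

lemma exA_exPos (m : ℕ) : exA (exPos m) = (1 : ℝ) / (exBlk m) := by
  have h := offset_lt m
  rw [exPos_eq_start, exA_eq (exBlk_pos m) (by omega), if_pos h]

lemma exA_exNeg (m : ℕ) : exA (exNeg m) = -((1 : ℝ) / (exBlk m)) := by
  have h := offset_lt m
  rw [exNeg_eq_start, exA_eq (exBlk_pos m) (by omega), if_neg (by omega)]

lemma exA_exPos_pos (m : ℕ) : 0 < exA (exPos m) := by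
  rw [exA_exPos]
  have := exBlk_pos m
  positivity

lemma exA_exNeg_nonpos (m : ℕ) : exA (exNeg m) ≤ 0 := by
  rw [exA_exNeg]
  have := exBlk_pos m
  have : (0:ℝ) < 1 / (exBlk m) := by positivity
  linarith

lemma exPos_strictMono : StrictMono exPos := by
  apply strictMono_nat_of_lt_succ
  intro m
  have := exCpos_mono (Nat.sub_le_sub_right (exBlk_mono (show m ≤ m + 1 by omega)) 1)
  unfold exPos
  omega

lemma exNeg_strictMono : StrictMono exNeg := by
  apply strictMono_nat_of_lt_succ
  intro m
  have := exCpos_mono (exBlk_mono (show m ≤ m + 1 by omega))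
  unfold exNeg
  omega

/-- Every position is a positive or a negative position. -/
lemma exPos_or_exNeg (n : ℕ) : (∃ m, exPos m = n) ∨ (∃ m, exNeg m = n) := by
  set k := exBlockIdx n with hk
  have hk1 : 1 ≤ k := exBlockIdx_pos n
  have hstart : exBlockStart k ≤ n := exBlockIdx_start_le n
  have hub : n < exBlockStart k + exBlockLen k := by
    have h1 := lt_exBlockIdx_start_succ n
    rw [exBlockStart_succ k hk1, ← exBlockLen_eq] at h1
    exact h1
  rw [exBlockLen_eq] at hub
  set o := n - exBlockStart k with hodef
  have hn : n = exBlockStart k + o := by omega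
  rcases Nat.lt_or_ge o (exC k) with hlt | hge
  · left
    refine ⟨exCpos (k - 1) + o, ?_⟩
    have hblk : exBlk (exCpos (k - 1) + o) = k := by
      rw [exBlk_eq_iff hk1]
      constructor
      · omega
      · rw [show k = (k - 1) + 1 by omega, exCpos_succ, show k - 1 + 1 = k by omega]
        omega
    rw [exPos, hblk, hn, exBlockStart_eq]
    omega
  · right
    refine ⟨exCpos (k - 1) + (o - exC k), ?_⟩
    have hblk : exBlk (exCpos (k - 1) + (o - exC k)) = k := by
      rw [exBlk_eq_iff hk1]
      constructor
      · omega
      · rw [show k = (k - 1) + 1 by omega, exCpos_succ, show k - 1 + 1 = k by omega]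
        omega
    rw [exNeg, hblk, hn, exBlockStart_eq]
    rw [show exCpos k = exCpos (k-1) + exC k by
      rw [show k = (k - 1) + 1 by omega, exCpos_succ, show k - 1 + 1 = k by omega]]
    omega

lemma range_exPos : Set.range exPos = {n | 0 < exA n} := by
  ext n
  constructor
  · rintro ⟨m, rfl⟩; exact exA_exPos_pos m
  · intro hn
    rcases exPos_or_exNeg n with ⟨m, rfl⟩ | ⟨m, rfl⟩
    · exact ⟨m, rfl⟩
    · exact absurd hn (by simpa using exA_exNeg_nonpos m)

lemma range_exNeg : Set.range exNeg = {n | exA n ≤ 0} := by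
  ext n
  constructor
  · rintro ⟨m, rfl⟩; exact exA_exNeg_nonpos m
  · intro hn
    rcases exPos_or_exNeg n with ⟨m, rfl⟩ | ⟨m, rfl⟩
    · exact absurd hn (by simpa using exA_exPos_pos m)
    · exact ⟨m, rfl⟩

lemma exBlk_succ_eq {m : ℕ} (h : m + 1 < exCpos (exBlk m)) : exBlk (m + 1) = exBlk m := by
  rw [exBlk_eq_iff (exBlk_pos m)]
  exact ⟨le_trans (exCpos_exBlk_sub_one_le m) (by omega), h⟩

lemma exPos_add_one (m : ℕ) :
    exPos m + 1 = if m + 1 < exCpos (exBlk m) then exPos (m + 1)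
      else exNeg (exCpos (exBlk m - 1)) := by
  split
  · rename_i h
    unfold exPos
    rw [exBlk_succ_eq h]
    omega
  · rename_i h
    have hm1 : m + 1 = exCpos (exBlk m) := by have := lt_exCpos_exBlk m; omega
    have hb : exBlk (exCpos (exBlk m - 1)) = exBlk m := by
      rw [exBlk_exCpos]
      have := exBlk_pos m
      omega
    unfold exNeg exPos
    rw [hb]
    omega

lemma exNeg_add_one (m : ℕ) :
    exNeg m + 1 = if m + 1 < exCpos (exBlk m) then exNeg (m + 1)
      else exPos (exCpos (exBlk m)) := by
  split
  · rename_i h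
    unfold exNeg
    rw [exBlk_succ_eq h]
    omega
  · rename_i h
    have hm1 : m + 1 = exCpos (exBlk m) := by have := lt_exCpos_exBlk m; omega
    have hb : exBlk (exCpos (exBlk m)) = exBlk m + 1 := exBlk_exCpos _
    unfold exNeg exPos
    rw [hb]
    simp only [Nat.add_sub_cancel]
    omega

lemma exPos_ne_exNeg (m m' : ℕ) : exPos m ≠ exNeg m' := by
  intro h
  have h1 := exA_exPos_pos m
  rw [h] at h1
  exact absurd h1 (not_lt.2 (exA_exNeg_nonpos m'))

/-- The set of positions given by the first `p` positives and first `q` negatives. -/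
def exT (p q : ℕ) : Finset ℕ :=
  ((Finset.range p).image exPos) ∪ ((Finset.range q).image exNeg)

/-- Partial sums of the positive part. -/
def exF (m : ℕ) : ℝ := ∑ j ∈ Finset.range m, (1 : ℝ) / (exBlk j : ℝ)

lemma exPos_mem_exT {p q m : ℕ} : exPos m ∈ exT p q ↔ m < p := by
  unfold exT
  simp only [Finset.mem_union, Finset.mem_image, Finset.mem_range]
  constructor
  · rintro (⟨j, hj, hje⟩ | ⟨j, hj, hje⟩)
    · rwa [← exPos_strictMono.injective hje]
    · exact absurd hje.symm (exPos_ne_exNeg m j)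
  · intro h; exact Or.inl ⟨m, h, rfl⟩

lemma exNeg_mem_exT {p q m : ℕ} : exNeg m ∈ exT p q ↔ m < q := by
  unfold exT
  simp only [Finset.mem_union, Finset.mem_image, Finset.mem_range]
  constructor
  · rintro (⟨j, hj, hje⟩ | ⟨j, hj, hje⟩)
    · exact absurd hje (exPos_ne_exNeg j m)
    · rwa [← exNeg_strictMono.injective hje]
  · intro h; exact Or.inr ⟨m, h, rfl⟩

lemma exT_disjoint (p q : ℕ) :
    Disjoint ((Finset.range p).image exPos) ((Finset.range q).image exNeg) := by
  rw [Finset.disjoint_left]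
  rintro x hx hy
  simp only [Finset.mem_image, Finset.mem_range] at hx hy
  obtain ⟨m, _, rfl⟩ := hx
  obtain ⟨m', _, h⟩ := hy
  exact exPos_ne_exNeg m m' h.symm

lemma sum_exT (p q : ℕ) : ∑ x ∈ exT p q, exA x = exF p - exF q := by
  unfold exT
  rw [Finset.sum_union (exT_disjoint p q),
    Finset.sum_image (fun a _ b _ h => exPos_strictMono.injective h),
    Finset.sum_image (fun a _ b _ h => exNeg_strictMono.injective h)]
  simp only [exA_exPos, exA_exNeg, Finset.sum_neg_distrib]
  rw [sub_eq_add_neg]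
  rfl

lemma card_exT (p q : ℕ) : (exT p q).card = p + q := by
  unfold exT
  rw [Finset.card_union_of_disjoint (exT_disjoint p q),
    Finset.card_image_of_injective _ exPos_strictMono.injective,
    Finset.card_image_of_injective _ exNeg_strictMono.injective,
    Finset.card_range, Finset.card_range]

/-- blockCount of a balanced-or-one-extra `exT` set is at most 2. -/
lemma blockCount_exT_le {p q : ℕ} (h1 : q ≤ p) (h2 : p ≤ q + 1) :
    blockCount (exT p q) ≤ 2 := by
  have hsub : (exT p q).filter (fun x => x + 1 ∉ exT p q) ⊆ {exPos (p - 1), exNeg (q - 1)} := by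
    intro x hx
    rw [Finset.mem_filter] at hx
    obtain ⟨hxT, hxs⟩ := hx
    rw [exT, Finset.mem_union] at hxT
    simp only [Finset.mem_insert, Finset.mem_singleton]
    rcases hxT with hxP | hxN
    · simp only [Finset.mem_image, Finset.mem_range] at hxP
      obtain ⟨m, hm, rfl⟩ := hxP
      left
      have hs := exPos_add_one m
      split at hs
      · rw [hs] at hxs
        have : ¬ (m + 1 < p) := fun hc => hxs (exPos_mem_exT.2 hc)
        congr 1; omega
      · rw [hs] at hxs
        have hle : exCpos (exBlk m - 1) ≤ m := exCpos_exBlk_sub_one_le m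
        have : ¬ (exCpos (exBlk m - 1) < q) := fun hc => hxs (exNeg_mem_exT.2 hc)
        congr 1; omega
    · simp only [Finset.mem_image, Finset.mem_range] at hxN
      obtain ⟨m, hm, rfl⟩ := hxN
      right
      have hs := exNeg_add_one m
      split at hs
      · rw [hs] at hxs
        have : ¬ (m + 1 < q) := fun hc => hxs (exNeg_mem_exT.2 hc)
        congr 1; omega
      · rw [hs] at hxs
        rename_i hnlt
        have hm1 : m + 1 = exCpos (exBlk m) := by have := lt_exCpos_exBlk m; omega
        have : ¬ (exCpos (exBlk m) < p) := fun hc => hxs (exPos_mem_exT.2 hc)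
        congr 1; omega
  calc blockCount (exT p q) ≤ ({exPos (p - 1), exNeg (q - 1)} : Finset ℕ).card :=
        Finset.card_le_card hsub
    _ ≤ 2 := Finset.card_insert_le _ _ |>.trans (by simp)

/-- Key lower bound: if the positives run `C`+ blocks ahead of the negatives,
the block count exceeds `C`. -/
lemma exBlk_window_p {p q C : ℕ} (hq : q < p) (h : blockCount (exT p q) ≤ C) :
    exBlk (p - 1) ≤ exBlk q + C := by
  by_contra hcon
  push_neg at hcon
  -- map each k in Ioc (exBlk q) (exBlk (p-1)) to an interval-ender
  set s := (exT p q).filter (fun x => x + 1 ∉ exT p q) with hs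
  have hmap : ∀ k ∈ Finset.Ioc (exBlk q) (exBlk (p - 1)),
      exPos (min p (exCpos k) - 1) ∈ s ∧ exBlk (min p (exCpos k) - 1) = k := by
    intro k hk
    rw [Finset.mem_Ioc] at hk
    obtain ⟨hk1, hk2⟩ := hk
    have hkpos : 1 ≤ k := lt_of_le_of_lt (by omega : 0 ≤ exBlk q) hk1
    have hCk : exCpos (k - 1) < exCpos k := by
      have := exCpos_lt_succ (k - 1)
      rwa [show k - 1 + 1 = k by omega] at this
    have hCkp : exCpos (k - 1) ≤ p - 1 := by
      calc exCpos (k - 1) ≤ exCpos (exBlk (p - 1) - 1) := exCpos_mono (by omega)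
        _ ≤ p - 1 := exCpos_exBlk_sub_one_le _
    have hq' : q < exCpos (k - 1) := by
      have : exCpos (exBlk q) ≤ exCpos (k - 1) := exCpos_mono (by omega)
      have := lt_exCpos_exBlk q
      omega
    set j := min p (exCpos k) - 1 with hj
    have hjlt : j < p := by omega
    have hjblk : exBlk j = k := by
      rw [exBlk_eq_iff hkpos]
      omega
    refine ⟨?_, by rw [hjblk]⟩
    rw [hs, Finset.mem_filter]
    refine ⟨exPos_mem_exT.2 hjlt, ?_⟩
    have hstep := exPos_add_one j
    rw [hjblk] at hstep
    split at hstep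
    · rename_i hin
      have hjp : j + 1 = p := by omega
      rw [hstep, hjp]
      intro hmem
      exact absurd (exPos_mem_exT.1 hmem) (by omega)
    · rw [hstep]
      intro hmem
      have := exNeg_mem_exT.1 hmem
      omega
  have hinj : Set.InjOn (fun k => exPos (min p (exCpos k) - 1))
      (Finset.Ioc (exBlk q) (exBlk (p - 1))) := by
    intro a ha b hb hab
    have h1 := (hmap a ha).2
    have h2 := (hmap b hb).2
    have := exPos_strictMono.injective hab
    rw [← h1, ← h2, this]
  have hcard : (Finset.Ioc (exBlk q) (exBlk (p - 1))).card ≤ s.card := by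
    apply Finset.card_le_card_of_injOn _ (fun k hk => (hmap k hk).1) hinj
  rw [Nat.card_Ioc] at hcard
  have : blockCount (exT p q) = s.card := rfl
  omega

/-- Symmetric version for the negatives running ahead. -/
lemma exBlk_window_q {p q C : ℕ} (hp : p < q) (h : blockCount (exT p q) ≤ C) :
    exBlk (q - 1) ≤ exBlk p + C := by
  by_contra hcon
  push_neg at hcon
  set s := (exT p q).filter (fun x => x + 1 ∉ exT p q) with hs
  have hmap : ∀ k ∈ Finset.Ioc (exBlk p) (exBlk (q - 1)),
      exNeg (min q (exCpos k) - 1) ∈ s ∧ exBlk (min q (exCpos k) - 1) = k := by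
    intro k hk
    rw [Finset.mem_Ioc] at hk
    obtain ⟨hk1, hk2⟩ := hk
    have hkpos : 1 ≤ k := lt_of_le_of_lt (by omega : 0 ≤ exBlk p) hk1
    have hCk : exCpos (k - 1) < exCpos k := by
      have := exCpos_lt_succ (k - 1)
      rwa [show k - 1 + 1 = k by omega] at this
    have hCkp : exCpos (k - 1) ≤ q - 1 := by
      calc exCpos (k - 1) ≤ exCpos (exBlk (q - 1) - 1) := exCpos_mono (by omega)
        _ ≤ q - 1 := exCpos_exBlk_sub_one_le _
    have hp' : p < exCpos (k - 1) := by
      have : exCpos (exBlk p) ≤ exCpos (k - 1) := exCpos_mono (by omega)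
      have := lt_exCpos_exBlk p
      omega
    have hpk : p < exCpos k := by omega
    set j := min q (exCpos k) - 1 with hj
    have hjlt : j < q := by omega
    have hjblk : exBlk j = k := by
      rw [exBlk_eq_iff hkpos]
      omega
    refine ⟨?_, by rw [hjblk]⟩
    rw [hs, Finset.mem_filter]
    refine ⟨exNeg_mem_exT.2 hjlt, ?_⟩
    have hstep := exNeg_add_one j
    rw [hjblk] at hstep
    split at hstep
    · rename_i hin
      have hjq : j + 1 = q := by omega
      rw [hstep, hjq]
      intro hmem
      exact absurd (exNeg_mem_exT.1 hmem) (by omega)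
    · rw [hstep]
      intro hmem
      have := exPos_mem_exT.1 hmem
      omega
  have hinj : Set.InjOn (fun k => exNeg (min q (exCpos k) - 1))
      (Finset.Ioc (exBlk p) (exBlk (q - 1))) := by
    intro a ha b hb hab
    have h1 := (hmap a ha).2
    have h2 := (hmap b hb).2
    have := exNeg_strictMono.injective hab
    rw [← h1, ← h2, this]
  have hcard : (Finset.Ioc (exBlk p) (exBlk (q - 1))).card ≤ s.card := by
    apply Finset.card_le_card_of_injOn _ (fun k hk => (hmap k hk).1) hinj
  rw [Nat.card_Ioc] at hcard
  have : blockCount (exT p q) = s.card := rfl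
  omega

/-- The riffle rearrangement: alternate positives and negatives. -/
def exRif (n : ℕ) : ℕ := if n % 2 = 0 then exPos (n / 2) else exNeg (n / 2)

lemma exRif_even {i : ℕ} (h : i % 2 = 0) : exRif i = exPos (i / 2) := by
  unfold exRif; rw [if_pos h]

lemma exRif_odd {i : ℕ} (h : i % 2 = 1) : exRif i = exNeg (i / 2) := by
  unfold exRif; rw [if_neg (by omega)]

lemma exRif_bijective : Function.Bijective exRif := by
  constructor
  · intro i j hij
    unfold exRif at hij
    split at hij <;> split at hij
    · have := exPos_strictMono.injective hij; omega
    · exact absurd hij (exPos_ne_exNeg _ _)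
    · exact absurd hij.symm (exPos_ne_exNeg _ _)
    · have := exNeg_strictMono.injective hij; omega
  · intro x
    rcases exPos_or_exNeg x with ⟨m, hm⟩ | ⟨m, hm⟩
    · exact ⟨2 * m, by simp only [exRif]; rw [if_pos (by omega), show 2 * m / 2 = m by omega]; exact hm⟩
    · exact ⟨2 * m + 1, by simp only [exRif]; rw [if_neg (by omega), show (2 * m + 1) / 2 = m by omega]; exact hm⟩

/-- The riffle as a permutation. -/
def exRifPerm : Equiv.Perm ℕ := Equiv.ofBijective exRif exRif_bijective

lemma exRifPerm_apply (n : ℕ) : exRifPerm n = exRif n := rfl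

lemma image_exRif (n : ℕ) :
    (Finset.range n).image (fun i => exRifPerm i) = exT ((n + 1) / 2) (n / 2) := by
  ext x
  simp only [Finset.mem_image, Finset.mem_range, exT, Finset.mem_union, exRifPerm_apply]
  constructor
  · rintro ⟨i, hi, rfl⟩
    rcases Nat.mod_two_eq_zero_or_one i with h | h
    · rw [exRif_even h]
      exact Or.inl ⟨i / 2, by omega, rfl⟩
    · rw [exRif_odd h]
      exact Or.inr ⟨i / 2, by omega, rfl⟩
  · rintro (⟨m, hm, rfl⟩ | ⟨m, hm, rfl⟩)
    · exact ⟨2 * m, by omega, by rw [exRif_even (by omega), show 2 * m / 2 = m by omega]⟩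
    · exact ⟨2 * m + 1, by omega, by rw [exRif_odd (by omega), show (2 * m + 1) / 2 = m by omega]⟩

lemma exRif_parity_of_pos {i : ℕ} (h : 0 < exA (exRif i)) : i % 2 = 0 := by
  by_contra hc
  rw [exRif, if_neg hc] at h
  exact absurd h (not_lt.2 (exA_exNeg_nonpos _))

lemma exRif_parity_of_nonpos {i : ℕ} (h : exA (exRif i) ≤ 0) : i % 2 = 1 := by
  rcases Nat.mod_two_eq_zero_or_one i with hp | hp
  · rw [exRif, if_pos hp] at h
    exact absurd (exA_exPos_pos (i / 2)) (not_lt.2 h)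
  · exact hp

lemma exRif_isTypeR : IsTypeR exA exRifPerm := by
  intro i j hlt hsign
  rw [exRifPerm_apply, exRifPerm_apply] at hlt hsign
  rcases hsign with ⟨h1, h2⟩ | ⟨h1, h2⟩
  · have p1 := exRif_parity_of_pos h1
    have p2 := exRif_parity_of_pos h2
    rw [exRif_even p1, exRif_even p2] at hlt
    have := exPos_strictMono.lt_iff_lt.1 hlt
    omega
  · have p1 := exRif_parity_of_nonpos h1
    have p2 := exRif_parity_of_nonpos h2
    rw [exRif_odd p1, exRif_odd p2] at hlt
    have := exNeg_strictMono.lt_iff_lt.1 hlt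
    omega

lemma exRif_hasBBN : HasBBN exRifPerm 2 := by
  intro n
  rw [show (Finset.range (n + 1)).image exRifPerm
      = (Finset.range (n + 1)).image (fun i => exRifPerm i) from rfl, image_exRif]
  exact blockCount_exT_le (by omega) (by omega)

lemma partialSum_perm (σ : Equiv.Perm ℕ) (n : ℕ) :
    partialSum (fun i => exA (σ i)) n = ∑ x ∈ (Finset.range n).image (fun i => σ i), exA x := by
  rw [Finset.sum_image (fun a _ b _ h => σ.injective h)]
  rfl

lemma exBlk_tendsto : Filter.Tendsto exBlk Filter.atTop Filter.atTop := by
  apply Monotone.tendsto_atTop_atTop exBlk_mono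
  intro b
  exact ⟨exCpos b, by rw [exBlk_exCpos]; omega⟩

lemma exRif_convergesTo : ConvergesTo (fun n => exA (exRifPerm n)) 0 := by
  have key : ∀ n : ℕ, |partialSum (fun i => exA (exRifPerm i)) n| ≤ 1 / ((exBlk (n / 2) : ℝ)) := by
    intro n
    rw [partialSum_perm, image_exRif, sum_exT]
    have hblk := exBlk_pos (n / 2)
    have hpos : (0:ℝ) < (exBlk (n / 2) : ℝ) := by exact_mod_cast hblk
    rcases Nat.mod_two_eq_zero_or_one n with hp | hp
    · rw [show (n + 1) / 2 = n / 2 by omega]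
      simp only [sub_self, abs_zero]
      positivity
    · rw [show (n + 1) / 2 = n / 2 + 1 by omega]
      rw [exF, exF, Finset.sum_range_succ, add_sub_cancel_left]
      rw [abs_of_nonneg (by positivity)]
  unfold ConvergesTo
  have h2 : Filter.Tendsto (fun n : ℕ => 1 / ((exBlk (n / 2) : ℝ))) Filter.atTop (nhds 0) := by
    apply Filter.Tendsto.comp tendsto_one_div_atTop_nhds_zero_nat
    apply Filter.Tendsto.comp exBlk_tendsto
    apply Filter.tendsto_atTop.2
    intro b
    filter_upwards [Filter.eventually_ge_atTop (2 * b)] with n hn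
    omega
  have h0 : Filter.Tendsto (fun n : ℕ => -(1 / ((exBlk (n / 2) : ℝ)))) Filter.atTop (nhds 0) := by
    simpa using h2.neg
  apply tendsto_of_tendsto_of_tendsto_of_le_of_le h0 h2
  · intro n
    have := key n
    rw [abs_le] at this
    exact this.1
  · intro n
    have := key n
    rw [abs_le] at this
    exact this.2

lemma zero_mem_ZR : (0 : ℝ) ∈ ZR exA :=
  ⟨exRifPerm, ⟨exRif_isTypeR, ⟨2, exRif_hasBBN⟩, ⟨0, exRif_convergesTo⟩⟩, exRif_convergesTo⟩

lemma posSet_infinite : {n : ℕ | 0 < exA n}.Infinite :=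
  range_exPos ▸ Set.infinite_range_of_injective exPos_strictMono.injective

lemma negSet_infinite : {n : ℕ | exA n ≤ 0}.Infinite :=
  range_exNeg ▸ Set.infinite_range_of_injective exNeg_strictMono.injective

lemma preimage_infinite (σ : Equiv.Perm ℕ) {s : Set ℕ} (hs : s.Infinite) :
    {i : ℕ | σ i ∈ s}.Infinite := by
  have : {i : ℕ | σ i ∈ s} = ⇑σ ⁻¹' s := rfl
  rw [this]
  exact hs.preimage (fun x _ => ⟨σ.symm x, by simp⟩)

lemma sigma_mono_pos {σ : Equiv.Perm ℕ} (hR : IsTypeR exA σ) {i j : ℕ}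
    (hi : 0 < exA (σ i)) (hj : 0 < exA (σ j)) (hij : i < j) : σ i < σ j := by
  rcases lt_trichotomy (σ i) (σ j) with h | h | h
  · exact h
  · exact absurd (σ.injective h) (by omega)
  · exact absurd (hR j i h (Or.inl ⟨hj, hi⟩)) (by omega)

lemma sigma_mono_neg {σ : Equiv.Perm ℕ} (hR : IsTypeR exA σ) {i j : ℕ}
    (hi : exA (σ i) ≤ 0) (hj : exA (σ j) ≤ 0) (hij : i < j) : σ i < σ j := by
  rcases lt_trichotomy (σ i) (σ j) with h | h | h
  · exact h
  · exact absurd (σ.injective h) (by omega)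
  · exact absurd (hR j i h (Or.inr ⟨hj, hi⟩)) (by omega)

lemma sigma_nth_pos {σ : Equiv.Perm ℕ} (hR : IsTypeR exA σ) (m : ℕ) :
    σ (Nat.nth (fun i => 0 < exA (σ i)) m) = exPos m := by
  set P := fun i => 0 < exA (σ i) with hP
  have hInf : (setOf P).Infinite := preimage_infinite σ posSet_infinite
  have hg : StrictMono (fun m => σ (Nat.nth P m)) := fun a b hab =>
    sigma_mono_pos hR (Nat.nth_mem_of_infinite hInf a) (Nat.nth_mem_of_infinite hInf b)
      ((Nat.nth_lt_nth hInf).2 hab)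
  have hrange : Set.range (fun m => σ (Nat.nth P m)) = Set.range exPos := by
    have h1 : Set.range (fun m => σ (Nat.nth P m)) = ⇑σ '' Set.range (Nat.nth P) := by
      rw [← Set.range_comp]; rfl
    rw [h1, Nat.range_nth_of_infinite hInf, range_exPos]
    have h2 : Set.ofPred P = ⇑σ ⁻¹' {n | 0 < exA n} := rfl
    rw [h2, Set.image_preimage_eq _ σ.surjective]
  have := (StrictMono.range_inj hg exPos_strictMono).1 hrange
  exact congrFun this m

lemma sigma_nth_neg {σ : Equiv.Perm ℕ} (hR : IsTypeR exA σ) (m : ℕ) :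
    σ (Nat.nth (fun i => exA (σ i) ≤ 0) m) = exNeg m := by
  set P := fun i => exA (σ i) ≤ 0 with hP
  have hInf : (setOf P).Infinite := preimage_infinite σ negSet_infinite
  have hg : StrictMono (fun m => σ (Nat.nth P m)) := fun a b hab =>
    sigma_mono_neg hR (Nat.nth_mem_of_infinite hInf a) (Nat.nth_mem_of_infinite hInf b)
      ((Nat.nth_lt_nth hInf).2 hab)
  have hrange : Set.range (fun m => σ (Nat.nth P m)) = Set.range exNeg := by
    have h1 : Set.range (fun m => σ (Nat.nth P m)) = ⇑σ '' Set.range (Nat.nth P) := by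
      rw [← Set.range_comp]; rfl
    rw [h1, Nat.range_nth_of_infinite hInf, range_exNeg]
    have h2 : Set.ofPred P = ⇑σ ⁻¹' {n | exA n ≤ 0} := rfl
    rw [h2, Set.image_preimage_eq _ σ.surjective]
  have := (StrictMono.range_inj hg exNeg_strictMono).1 hrange
  exact congrFun this m

lemma filter_range_eq_image_nth (p : ℕ → Prop) (hInf : (setOf p).Infinite) (n : ℕ) :
    (Finset.range n).filter p = (Finset.range (Nat.count p n)).image (Nat.nth p) := by
  ext i
  simp only [Finset.mem_filter, Finset.mem_range, Finset.mem_image]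
  constructor
  · rintro ⟨hin, hp⟩
    refine ⟨Nat.count p i, ?_, Nat.nth_count hp⟩
    calc Nat.count p i < Nat.count p (i + 1) := by rw [Nat.count_succ, if_pos hp]; omega
      _ ≤ Nat.count p n := Nat.count_monotone p (by omega)
  · rintro ⟨m, hm, rfl⟩
    exact ⟨Nat.nth_lt_of_lt_count hm, Nat.nth_mem_of_infinite hInf m⟩

lemma image_sigma {σ : Equiv.Perm ℕ} (hR : IsTypeR exA σ) (n : ℕ) :
    (Finset.range n).image (fun i => σ i)
      = exT (Nat.count (fun i => 0 < exA (σ i)) n) (Nat.count (fun i => exA (σ i) ≤ 0) n) := by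
  set P := fun i => 0 < exA (σ i) with hPdef
  set N := fun i => exA (σ i) ≤ 0 with hNdef
  have hInfP : (setOf P).Infinite := preimage_infinite σ posSet_infinite
  have hInfN : (setOf N).Infinite := preimage_infinite σ negSet_infinite
  have hsplit : Finset.range n = (Finset.range n).filter P ∪ (Finset.range n).filter (fun i => ¬ P i) :=
    (Finset.filter_union_filter_not_eq _ _).symm
  have hNP : (Finset.range n).filter (fun i => ¬ P i) = (Finset.range n).filter N := by
    apply Finset.filter_congr
    intro i _
    simp [hPdef, hNdef, not_lt]
  rw [exT]
  conv_lhs => rw [hsplit]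
  rw [Finset.image_union, hNP, filter_range_eq_image_nth P hInfP, filter_range_eq_image_nth N hInfN,
    Finset.image_image, Finset.image_image]
  congr 1
  · apply Finset.image_congr
    intro m _
    exact sigma_nth_pos hR m
  · apply Finset.image_congr
    intro m _
    exact sigma_nth_neg hR m

lemma count_add_count (σ : Equiv.Perm ℕ) (n : ℕ) :
    Nat.count (fun i => 0 < exA (σ i)) n + Nat.count (fun i => exA (σ i) ≤ 0) n = n := by
  rw [Nat.count_eq_card_filter_range, Nat.count_eq_card_filter_range]
  have h := Finset.card_filter_add_card_filter_not
    (s := Finset.range n) (p := fun i => 0 < exA (σ i))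
  rw [Finset.card_range] at h
  have heq : (Finset.range n).filter (fun a => ¬ 0 < exA (σ a))
      = (Finset.range n).filter (fun i => exA (σ i) ≤ 0) :=
    Finset.filter_congr (by intro i _; simp [not_lt])
  rw [heq] at h
  exact h

lemma count_pos_unbounded (σ : Equiv.Perm ℕ) (M : ℕ) :
    ∃ n, M ≤ Nat.count (fun i => 0 < exA (σ i)) n := by
  refine ⟨(Finset.range M).sup (fun j => σ.symm (exPos j)) + 1, ?_⟩
  rw [Nat.count_eq_card_filter_range]
  have hcard := Finset.card_le_card_of_injOn (fun j => σ.symm (exPos j))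
    (t := ((Finset.range ((Finset.range M).sup (fun j => σ.symm (exPos j)) + 1)).filter
          (fun i => 0 < exA (σ i))))
    (s := Finset.range M) ?_ ?_
  · rwa [Finset.card_range] at hcard
  · intro j hj
    rw [Finset.mem_coe, Finset.mem_filter, Finset.mem_range]
    beta_reduce
    refine ⟨by have := Finset.le_sup (f := fun j => σ.symm (exPos j)) hj; omega, ?_⟩
    rw [Equiv.apply_symm_apply]
    exact exA_exPos_pos j
  · intro a _ b _ hab
    exact exPos_strictMono.injective (σ.symm.injective hab)

lemma count_neg_unbounded (σ : Equiv.Perm ℕ) (M : ℕ) :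
    ∃ n, M ≤ Nat.count (fun i => exA (σ i) ≤ 0) n := by
  refine ⟨(Finset.range M).sup (fun j => σ.symm (exNeg j)) + 1, ?_⟩
  rw [Nat.count_eq_card_filter_range]
  have hcard := Finset.card_le_card_of_injOn (fun j => σ.symm (exNeg j))
    (t := ((Finset.range ((Finset.range M).sup (fun j => σ.symm (exNeg j)) + 1)).filter
          (fun i => exA (σ i) ≤ 0)))
    (s := Finset.range M) ?_ ?_
  · rwa [Finset.card_range] at hcard
  · intro j hj
    rw [Finset.mem_coe, Finset.mem_filter, Finset.mem_range]
    beta_reduce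
    refine ⟨by have := Finset.le_sup (f := fun j => σ.symm (exNeg j)) hj; omega, ?_⟩
    rw [Equiv.apply_symm_apply]
    exact exA_exNeg_nonpos j
  · intro a _ b _ hab
    exact exNeg_strictMono.injective (σ.symm.injective hab)

lemma nat_ivt {f : ℕ → ℕ} (h0 : f 0 = 0) (hstep : ∀ n, f (n + 1) ≤ f n + 1)
    (hub : ∀ M, ∃ n, M ≤ f n) (m : ℕ) : ∃ n, f n = m := by
  have hex : ∃ n, m ≤ f n := hub m
  rcases Nat.eq_zero_or_pos (Nat.find hex) with h | h
  · exact ⟨0, by have := Nat.find_spec hex; rw [h] at this; omega⟩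
  · have h1 := Nat.find_spec hex
    have h2 : ¬ m ≤ f (Nat.find hex - 1) := Nat.find_min hex (by omega)
    have h3 := hstep (Nat.find hex - 1)
    rw [show Nat.find hex - 1 + 1 = Nat.find hex by omega] at h3
    exact ⟨Nat.find hex, by omega⟩

lemma min_count_attains (σ : Equiv.Perm ℕ) (m : ℕ) :
    ∃ n, min (Nat.count (fun i => 0 < exA (σ i)) n) (Nat.count (fun i => exA (σ i) ≤ 0) n) = m := by
  apply nat_ivt
  · simp [Nat.count_zero]
  · intro n
    have h1 := Nat.count_succ (fun i => 0 < exA (σ i)) n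
    have h2 := Nat.count_succ (fun i => exA (σ i) ≤ 0) n
    split at h1 <;> split at h2 <;> omega
  · intro M
    obtain ⟨n1, hn1⟩ := count_pos_unbounded σ M
    obtain ⟨n2, hn2⟩ := count_neg_unbounded σ M
    refine ⟨max n1 n2, ?_⟩
    have m1 := Nat.count_monotone (fun i => 0 < exA (σ i)) (le_max_left n1 n2)
    have m2 := Nat.count_monotone (fun i => exA (σ i) ≤ 0) (le_max_right n1 n2)
    omega

lemma exC_eq_one_of_window {t k : ℕ} (h1 : t * t < k) (h2 : k < (t + 1) * (t + 1)) :
    exC k = 1 := by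
  have hs1 : t ≤ Nat.sqrt k := Nat.le_sqrt.2 (by omega)
  have hs2 : Nat.sqrt k < t + 1 := Nat.sqrt_lt'.2 (by rw [pow_two]; omega)
  have hst : Nat.sqrt k = t := by omega
  rw [exC, if_neg (by rw [hst]; omega)]

lemma exCpos_window (t : ℕ) : ∀ d, d ≤ 2 * t → exCpos (t * t + d) = exCpos (t * t) + d := by
  intro d
  induction d with
  | zero => simp
  | succ e ih =>
    intro h
    rw [show t * t + (e + 1) = (t * t + e) + 1 by omega, exCpos_succ, ih (by omega),
      exC_eq_one_of_window (t := t) (by omega) (by nlinarith)]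
    omega

lemma exF_mono : Monotone exF := by
  apply monotone_nat_of_le_succ
  intro m
  rw [exF, exF, Finset.sum_range_succ]
  have : (0:ℝ) ≤ 1 / (exBlk m : ℝ) := by positivity
  linarith

lemma exF_diff_le {q p C t : ℕ} (hC : C < t) (ht : 1 ≤ t) (hq : q = exCpos (t * t))
    (hqp : q < p) (hblk : exBlk (p - 1) ≤ exBlk q + C) :
    exF p - exF q ≤ (C + 1 : ℝ) / ((t : ℝ) * t + 1) := by
  have hblkq : exBlk q = t * t + 1 := by rw [hq, exBlk_exCpos]
  have hple : p ≤ q + (C + 1) := by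
    have h1 : p - 1 < exCpos (exBlk (p - 1)) := lt_exCpos_exBlk (p - 1)
    have h2 : exCpos (exBlk (p - 1)) ≤ exCpos (t * t + (C + 1)) := by
      apply exCpos_mono
      omega
    have h3 : exCpos (t * t + (C + 1)) = exCpos (t * t) + (C + 1) :=
      exCpos_window t (C + 1) (by omega)
    omega
  have hsum : exF p - exF q = ∑ j ∈ Finset.Ico q p, (1 : ℝ) / (exBlk j : ℝ) := by
    rw [exF, exF, Finset.sum_Ico_eq_sub _ (le_of_lt hqp)]
  have hterm : ∀ j ∈ Finset.Ico q p, (1 : ℝ) / (exBlk j : ℝ) ≤ 1 / ((t : ℝ) * t + 1) := by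
    intro j hj
    rw [Finset.mem_Ico] at hj
    have hble : t * t + 1 ≤ exBlk j := by
      rw [← hblkq]
      exact exBlk_mono hj.1
    apply one_div_le_one_div_of_le (by positivity)
    push_cast
    exact_mod_cast by exact_mod_cast Nat.cast_le.2 hble
  calc exF p - exF q ≤ ∑ _j ∈ Finset.Ico q p, 1 / ((t : ℝ) * t + 1) := by
        rw [hsum]; exact Finset.sum_le_sum hterm
    _ = ((p - q : ℕ) : ℝ) * (1 / ((t : ℝ) * t + 1)) := by
        rw [Finset.sum_const, Nat.card_Ico, nsmul_eq_mul]
    _ ≤ (C + 1 : ℝ) * (1 / ((t : ℝ) * t + 1)) := by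
        apply mul_le_mul_of_nonneg_right _ (by positivity)
        have : p - q ≤ C + 1 := by omega
        exact_mod_cast Nat.cast_le.2 this
    _ = (C + 1 : ℝ) / ((t : ℝ) * t + 1) := by ring

lemma hard_dir {σ : Equiv.Perm ℕ} {C : ℕ} (hR : IsTypeR exA σ) (hB : HasBBN σ C) {r : ℝ}
    (hconv : ConvergesTo (fun n => exA (σ n)) r) : r = 0 := by
  set pc := fun n => Nat.count (fun i => 0 < exA (σ i)) n with hpc
  set qc := fun n => Nat.count (fun i => exA (σ i) ≤ 0) n with hqc
  have hsum : ∀ n, partialSum (fun i => exA (σ i)) n = exF (pc n) - exF (qc n) := by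
    intro n
    rw [partialSum_perm σ n, image_sigma hR n, sum_exT]
  have key : ∀ t : ℕ, C < t → 1 ≤ t → ∃ n, t ≤ n ∧
      |partialSum (fun i => exA (σ i)) n| ≤ (C + 1 : ℝ) / ((t : ℝ) * t + 1) := by
    intro t htC ht1
    obtain ⟨n, hn⟩ := min_count_attains σ (exCpos (t * t))
    have hmin : min (pc n) (qc n) = exCpos (t * t) := hn
    have hcle : pc n ≤ n := Nat.count_le _
    have hcle' : qc n ≤ n := Nat.count_le _
    have htt : t ≤ t * t := Nat.le_mul_of_pos_left t (by omega)
    have hCt : t * t ≤ exCpos (t * t) := le_exCpos _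
    have hn1 : 1 ≤ n := by
      have : 1 ≤ exCpos (t * t) := by omega
      omega
    have hbc : blockCount (exT (pc n) (qc n)) ≤ C := by
      have h := hB (n - 1)
      rw [show n - 1 + 1 = n by omega] at h
      rwa [show (Finset.range n).image ⇑σ = exT (pc n) (qc n) from image_sigma hR n] at h
    refine ⟨n, by omega, ?_⟩
    rw [hsum n]
    rcases lt_trichotomy (pc n) (qc n) with h | h | h
    · have hminq : pc n = exCpos (t * t) := by omega
      have hblk : exBlk (qc n - 1) ≤ exBlk (pc n) + C := exBlk_window_q h hbc
      have hd : exF (qc n) - exF (pc n) ≤ (C + 1 : ℝ) / ((t : ℝ) * t + 1) :=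
        exF_diff_le htC ht1 hminq h hblk
      rw [abs_sub_comm, abs_of_nonneg (sub_nonneg.2 (exF_mono (le_of_lt h)))]
      exact hd
    · rw [h]
      simp only [sub_self, abs_zero]
      positivity
    · have hminq : qc n = exCpos (t * t) := by omega
      have hblk : exBlk (pc n - 1) ≤ exBlk (qc n) + C := exBlk_window_p h hbc
      rw [abs_of_nonneg (sub_nonneg.2 (exF_mono (le_of_lt h)))]
      exact exF_diff_le htC ht1 hminq h hblk
  by_contra hr
  have habs : 0 < |r| := abs_pos.2 hr
  rw [ConvergesTo, Metric.tendsto_atTop] at hconv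
  obtain ⟨N, hN⟩ := hconv (|r| / 2) (by positivity)
  obtain ⟨t0, ht0⟩ := exists_nat_ge ((2 * (C : ℝ) + 2) / |r|)
  set t := max (max t0 (C + 1)) (max N 1) with htdef
  have ht1 : 1 ≤ t := le_trans (le_max_right N 1) (le_max_right _ _)
  have htC : C < t := lt_of_lt_of_le (by omega) (le_trans (le_max_right t0 (C + 1)) (le_max_left _ _))
  have htN : N ≤ t := le_trans (le_max_left N 1) (le_max_right _ _)
  have htt0 : (t0 : ℝ) ≤ (t : ℝ) := by
    exact_mod_cast le_trans (le_max_left t0 (C + 1)) (le_max_left _ _)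
  obtain ⟨n, hnt, hnb⟩ := key t htC ht1
  have hdist := hN n (by omega)
  rw [Real.dist_eq] at hdist
  have hbound : (C + 1 : ℝ) / ((t : ℝ) * t + 1) < |r| / 2 := by
    rw [div_lt_div_iff₀ (by positivity) (by norm_num)]
    have h1 : (2 * (C : ℝ) + 2) / |r| ≤ (t : ℝ) := le_trans ht0 htt0
    have h2 : 2 * (C : ℝ) + 2 ≤ |r| * t := by
      rw [div_le_iff₀ habs] at h1
      linarith
    have h3 : (1 : ℝ) ≤ (t : ℝ) := by exact_mod_cast ht1
    nlinarith
  have : |r| ≤ |partialSum (fun i => exA (σ i)) n - r| + |partialSum (fun i => exA (σ i)) n| := by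
    have := abs_sub_abs_le_abs_sub (partialSum (fun i => exA (σ i)) n) r
    have h4 := abs_sub_comm (partialSum (fun i => exA (σ i)) n) r
    have h5 := abs_add_le (r - partialSum (fun i => exA (σ i)) n) (partialSum (fun i => exA (σ i)) n)
    simp only [sub_add_cancel] at h5
    rw [abs_sub_comm]
    exact h5
  linarith
/-- For the example series, the set `Z_R` of sums attainable by
type R λ-permutations is exactly `{0}`. -/
theorem statement15 : ZR exA = {0} := by
  ext r
  simp only [Set.mem_singleton_iff]
  constructor
  · rintro ⟨σ, ⟨hR, ⟨C, hB⟩, _⟩, hconv⟩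
    exact hard_dir hR hB hconv
  · rintro rfl
    exact zero_mem_ZR
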